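/- Let u_0, u_1, …, u_n ∈ ℤ^n be affinely independent and let P = conv(u_0, …, u_n) ⊆ ℝ^n. Assume: (a) P ∩ ℤ^n = {u_0, …, u_n}; and (b) the additive monoid η ∩ ℤ^n, where η ⊆ ℝ^n is the convex cone generated by the translated polytope P − u_0, is generated by the finite set {p − u_0 : p ∈ P ∩ ℤ^n}. Then (u_1 − u_0, …, u_n − u_0) is a ℤ-basis of ℤ^n; that is, P is the image of the standard simplex conv(0, e_1, …, e_n) under an affine transformation inducing an automorphism of the lattice ℤ^n. (This is the equality case def(P) = dim P of the paper's remark after Definition 2.5, under the running semigroup hypothesis of Lemma 1.3.) -/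

import Mathlib

/-- Let `u 0, …, u n ∈ ℤ^n` be affinely independent and `P = conv(u 0, …, u n) ⊆ ℝ^n`.
If (a) the only lattice points of `P` are its vertices, and (b) the additive monoid of lattice
points of the cone `η` over `P - u 0` is generated by `{p - u 0 : p ∈ P ∩ ℤ^n}`, then
`(u 1 - u 0, …, u n - u 0)` is a `ℤ`-basis of `ℤ^n`. -/
theorem stmt_1 (n : ℕ) (u : Fin (n + 1) → (Fin n → ℤ))
    (U : Fin (n + 1) → (Fin n → ℝ)) (hU : ∀ k i, U k i = (u k i : ℝ))
    (hind : AffineIndependent ℝ U)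
    (P : Set (Fin n → ℝ)) (hP : P = convexHull ℝ (Set.range U))
    (hlatP : {x ∈ P | ∀ i, ∃ m : ℤ, x i = (m : ℝ)} = Set.range U)
    (η : Set (Fin n → ℝ))
    (hη : η = {x | ∃ c : ℝ, 0 ≤ c ∧ ∃ y ∈ P, x = c • (y - U 0)})
    (hgen : (AddSubmonoid.closure
        {x : Fin n → ℝ | ∃ p ∈ P, (∀ i, ∃ m : ℤ, p i = (m : ℝ)) ∧ x = p - U 0} :
          Set (Fin n → ℝ)) =
      {x ∈ η | ∀ i, ∃ m : ℤ, x i = (m : ℝ)}) :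
    ∃ b : Module.Basis (Fin n) ℤ (Fin n → ℤ), ∀ k : Fin n, b k = u k.succ - u 0 := by
  classical
  -- the cast homomorphism
  set φ : (Fin n → ℤ) →ₗ[ℤ] (Fin n → ℝ) :=
    { toFun := fun z i => (z i : ℝ)
      map_add' := by intro a b; funext i; simp
      map_smul' := by intro c a; funext i; push_cast; simp }
  have hφinj : Function.Injective φ := by
    intro a b hab
    funext i
    have : ((a i : ℝ)) = (b i : ℝ) := congrFun hab i
    exact_mod_cast this
  have hφU : ∀ k, φ (u k) = U k := by
    intro k; funext i; simp [φ, hU]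
  -- difference vectors
  set v : Fin n → (Fin n → ℤ) := fun k => u k.succ - u 0 with hv
  set V : Fin n → (Fin n → ℝ) := fun k => U k.succ - U 0 with hV
  have hφv : ∀ k, φ (v k) = V k := by
    intro k; rw [hv, hV]; simp only [map_sub, hφU]
  -- linear independence of V over ℝ
  have hVind : LinearIndependent ℝ V := by
    have h1 := (affineIndependent_iff_linearIndependent_vsub ℝ U 0).mp hind
    have h2 : Function.Injective
        (fun k : Fin n => (⟨k.succ, Fin.succ_ne_zero k⟩ : {x : Fin (n+1) // x ≠ 0})) := by
      intro a b hab
      exact Fin.succ_injective n (congrArg Subtype.val hab)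
    have := h1.comp _ h2
    exact this
  -- V spans ℝ^n
  have hVspan : Submodule.span ℝ (Set.range V) = ⊤ :=
    hVind.span_eq_top_of_card_eq_finrank' (by simp)
  -- linear independence of v over ℤ
  have hvind : LinearIndependent ℤ v := by
    have hVZ : LinearIndependent ℤ V :=
      hVind.restrict_scalars (by intro a b hab; simpa using hab)
    have : LinearIndependent ℤ (φ ∘ v) := by
      convert hVZ using 1; funext k; simp [hφv]
    exact this.of_comp φ
  -- membership of vertices of P
  have hUP : ∀ k, U k ∈ P := by
    intro k
    rw [hP]
    exact subset_convexHull ℝ _ ⟨k, rfl⟩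
  -- the generating set is contained in the image of span ℤ (range v)
  set M : Submodule ℤ (Fin n → ℤ) := Submodule.span ℤ (Set.range v) with hM
  have hvM : ∀ k, v k ∈ M := fun k => Submodule.subset_span ⟨k, rfl⟩
  have hSM : AddSubmonoid.closure
      {x : Fin n → ℝ | ∃ p ∈ P, (∀ i, ∃ m : ℤ, p i = (m : ℝ)) ∧ x = p - U 0} ≤
      (M.toAddSubmonoid.map φ.toAddMonoidHom) := by
    apply AddSubmonoid.closure_le.mpr
    rintro x ⟨p, hpP, hplat, rfl⟩
    have hpU : p ∈ Set.range U := by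
      rw [← hlatP]; exact ⟨hpP, hplat⟩
    obtain ⟨k, rfl⟩ := hpU
    refine ⟨u k - u 0, ?_, by show φ (u k - u 0) = U k - U 0; rw [map_sub, hφU, hφU]⟩
    induction k using Fin.cases with
    | zero => simp
    | succ j => exact hvM j
  -- main claim: every integer vector is in M
  have hMtop : M = ⊤ := by
    rw [Submodule.eq_top_iff']
    intro z
    -- coefficients of φ z in terms of V
    have hz : φ z ∈ Submodule.span ℝ (Set.range V) := by rw [hVspan]; trivial
    obtain ⟨c, hc⟩ := (Submodule.mem_span_range_iff_exists_fun ℝ).mp hz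
    obtain ⟨Mx, hMx⟩ := (Finset.univ.image fun k => -c k).exists_le
    set N : ℕ := ⌈Mx⌉₊ with hN
    have hcN : ∀ k, 0 ≤ c k + N := by
      intro k
      have h1 : -c k ≤ Mx := hMx _ (Finset.mem_image.mpr ⟨k, Finset.mem_univ k, rfl⟩)
      have h2 : Mx ≤ (N : ℝ) := Nat.le_ceil Mx
      linarith
    set w : Fin n → ℤ := z + (N : ℤ) • ∑ k, v k with hw
    set x : Fin n → ℝ := φ w with hx
    have hxsum : x = ∑ k, (c k + (N : ℝ)) • V k := by
      have hsplit : ∑ k, (c k + (N : ℝ)) • V k = (∑ k, c k • V k) + ∑ k, (N : ℝ) • V k := by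
        rw [← Finset.sum_add_distrib]
        exact Finset.sum_congr rfl fun k _ => add_smul _ _ _
      rw [hx, hw, map_add, map_smul, map_sum]
      simp only [hφv]
      rw [hsplit, hc]
      congr 1
      rw [← Finset.smul_sum, ← Int.cast_smul_eq_zsmul ℝ]
      norm_num
    -- x is a lattice point of η
    have hxη : x ∈ η := by
      rw [hη]
      set d : Fin n → ℝ := fun k => c k + N with hd
      have hxd : x = ∑ k, d k • V k := hxsum
      have hd0 : ∀ k, 0 ≤ d k := hcN
      set s : ℝ := ∑ k, d k with hs
      have hs0 : 0 ≤ s := Finset.sum_nonneg fun k _ => hd0 k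
      rcases eq_or_lt_of_le hs0 with hseq | hslt
      · -- all coefficients are zero, x = 0
        have hdz : ∀ k ∈ Finset.univ, d k = 0 := by
          intro k _
          refine le_antisymm ?_ (hd0 k)
          have := Finset.single_le_sum (f := d) (fun k _ => hd0 k) (Finset.mem_univ k)
          rw [← hs, ← hseq] at this
          exact this
        have hx0 : x = 0 := by
          rw [hxd]
          exact Finset.sum_eq_zero fun k hk => by rw [hdz k hk, zero_smul]
        exact ⟨0, le_refl 0, U 0, hUP 0, by rw [hx0]; simp⟩
      · refine ⟨s, hs0, Finset.univ.centerMass d (fun k => U k.succ), ?_, ?_⟩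
        · rw [hP]
          exact Finset.centerMass_mem_convexHull _ (fun k _ => hd0 k) hslt
            (fun k _ => ⟨k.succ, rfl⟩)
        · have hcm : Finset.univ.centerMass d (fun k => U k.succ)
              = s⁻¹ • ∑ k, d k • U k.succ := by
            rw [Finset.centerMass, ← hs]
          rw [hcm, smul_sub, smul_smul, mul_inv_cancel₀ hslt.ne', one_smul]
          have hsU0 : s • U 0 = ∑ k, d k • U 0 := by rw [hs, Finset.sum_smul]
          rw [hsU0, ← Finset.sum_sub_distrib, hxd]
          exact Finset.sum_congr rfl fun k _ => by rw [← smul_sub]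
    have hxlat : ∀ i, ∃ m : ℤ, x i = (m : ℝ) := fun i => ⟨w i, rfl⟩
    have hxmem : x ∈ (AddSubmonoid.closure
        {x : Fin n → ℝ | ∃ p ∈ P, (∀ i, ∃ m : ℤ, p i = (m : ℝ)) ∧ x = p - U 0} :
          Set (Fin n → ℝ)) := by
      rw [hgen]; exact ⟨hxη, hxlat⟩
    obtain ⟨w', hw'M, hw'⟩ := hSM hxmem
    have hww' : w' = w := hφinj hw'
    have hwM : w ∈ M := hww' ▸ hw'M
    have hsumM : ((N : ℤ) • ∑ k, v k) ∈ M :=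
      M.smul_mem _ (Submodule.sum_mem M fun k _ => hvM k)
    have := M.sub_mem hwM hsumM
    rwa [hw, add_sub_cancel_right] at this
  exact ⟨Module.Basis.mk hvind (by rw [← hM, hMtop]), fun k => Module.Basis.mk_apply _ _ k⟩
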